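/- Let (Ω,T) be a uniquely ergodic dynamical system and A : Ω → SL(2,R) a continuous cocycle satisfying lim_{n→∞} (1/n) sup_{ω,ϱ∈Ω} |log‖A_n(ω)‖ − log‖A_n(ϱ)‖| = 0. Then A is uniform, i.e., (1/n) log‖A_n(ω)‖ converges uniformly in ω to a constant L(A). -/

import Mathlib

open scoped Matrix.Norms.L2Operator
open Filter Topology MeasureTheory

noncomputable abbrev SL2 := Matrix.SpecialLinearGroup (Fin 2) ℝ

noncomputable instance : MetricSpace SL2 :=
  MetricSpace.induced (fun B => (B : Matrix (Fin 2) (Fin 2) ℝ))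
    (fun _ _ h => Subtype.ext h) inferInstance

/-- The `n`-step cocycle iterate `A_n(ω) = A(T^{n-1}ω) ⋯ A(ω)`. -/
noncomputable def coc {Ω : Type*} (T : Ω → Ω) (A : Ω → SL2) : ℕ → Ω → SL2
  | 0, _ => 1
  | n + 1, ω => coc T A n (T ω) * A ω

/-- `log ‖A_n(ω)‖`, using the operator norm on 2×2 real matrices. -/
noncomputable def cocNorm {Ω : Type*} (T : Ω → Ω) (A : Ω → SL2) (n : ℕ) (ω : Ω) : ℝ :=
  Real.log ‖(coc T A n ω : Matrix (Fin 2) (Fin 2) ℝ)‖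

/-- Uniform hyperbolicity: `liminf (1/n) log ‖A_n(ω)‖ ≥ L > 0` uniformly in `ω`. -/
def UniformlyHyperbolic {Ω : Type*} (T : Ω → Ω) (A : Ω → SL2) : Prop :=
  ∃ L > (0 : ℝ), ∀ ε > (0 : ℝ), ∃ N : ℕ, ∀ n ≥ N, ∀ ω,
    L - ε < (1 / n : ℝ) * cocNorm T A n ω

/-- `(1/n) log ‖A_n(ω)‖ → L` uniformly in `ω`. -/
def TendsUniformlyToConst {Ω : Type*} (T : Ω → Ω) (A : Ω → SL2) (L : ℝ) : Prop :=
  ∀ ε > (0 : ℝ), ∃ N : ℕ, ∀ n ≥ N, ∀ ω,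
    |(1 / n : ℝ) * cocNorm T A n ω - L| < ε

/-- A uniform cocycle. -/
def IsUniformCocycle {Ω : Type*} (T : Ω → Ω) (A : Ω → SL2) : Prop :=
  ∃ L : ℝ, TendsUniformlyToConst T A L

/-- Uniform behavior: uniformly hyperbolic, or `(1/n) log ‖A_n(ω)‖ → 0` uniformly. -/
def HasUniformBehavior {Ω : Type*} (T : Ω → Ω) (A : Ω → SL2) : Prop :=
  UniformlyHyperbolic T A ∨ TendsUniformlyToConst T A 0


section Aux

lemma one_le_norm_sl2 (B : SL2) : (1:ℝ) ≤ ‖(B : Matrix (Fin 2) (Fin 2) ℝ)‖ := by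
  set M : Matrix (Fin 2) (Fin 2) ℝ := (B : Matrix (Fin 2) (Fin 2) ℝ) with hM
  have hdet : M.det = 1 := B.2
  clear_value M
  have key : ∀ x : EuclideanSpace ℝ (Fin 2),
      ‖(EuclideanSpace.equiv (Fin 2) ℝ).symm (M.mulVec x)‖ ≤ ‖M‖ * ‖x‖ :=
    fun x => Matrix.l2_opNorm_mulVec M x
  have h1 := key (EuclideanSpace.single 0 1)
  have h2 := key (EuclideanSpace.single 1 1)
  have e1 : ‖(EuclideanSpace.single (0 : Fin 2) (1:ℝ))‖ = 1 := by
    simp [EuclideanSpace.norm_single]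
  have e2 : ‖(EuclideanSpace.single (1 : Fin 2) (1:ℝ))‖ = 1 := by
    simp [EuclideanSpace.norm_single]
  rw [e1, mul_one] at h1
  rw [e2, mul_one] at h2
  have sq : ∀ y : Fin 2 → ℝ, ‖(EuclideanSpace.equiv (Fin 2) ℝ).symm y‖ ^ 2 = y 0 ^ 2 + y 1 ^ 2 := by
    intro y
    rw [EuclideanSpace.norm_eq]
    rw [Real.sq_sqrt (by positivity)]
    simp [Fin.sum_univ_two, sq_abs]
  have v1 : M.mulVec (EuclideanSpace.single 0 1 : EuclideanSpace ℝ (Fin 2)) = fun i => M i 0 := by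
    funext i
    simp [Matrix.mulVec, dotProduct, EuclideanSpace.single, Fin.sum_univ_two]
  have v2 : M.mulVec (EuclideanSpace.single 1 1 : EuclideanSpace ℝ (Fin 2)) = fun i => M i 1 := by
    funext i
    simp [Matrix.mulVec, dotProduct, EuclideanSpace.single, Fin.sum_univ_two]
  rw [v1] at h1; rw [v2] at h2
  have s1 := sq (fun i => M i 0)
  have s2 := sq (fun i => M i 1)
  have hd : M 0 0 * M 1 1 - M 0 1 * M 1 0 = 1 := by
    rw [Matrix.det_fin_two] at hdet; linarith
  have hn1 : (0:ℝ) ≤ ‖(EuclideanSpace.equiv (Fin 2) ℝ).symm (fun i => M i 0)‖ := norm_nonneg _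
  have hn2 : (0:ℝ) ≤ ‖(EuclideanSpace.equiv (Fin 2) ℝ).symm (fun i => M i 1)‖ := norm_nonneg _
  have q1 : M 0 0 ^ 2 + M 1 0 ^ 2 ≤ ‖M‖ ^ 2 := by nlinarith [norm_nonneg M]
  have q2 : M 0 1 ^ 2 + M 1 1 ^ 2 ≤ ‖M‖ ^ 2 := by nlinarith [norm_nonneg M]
  have cs : 1 ≤ (M 0 0 ^ 2 + M 1 0 ^ 2) * (M 0 1 ^ 2 + M 1 1 ^ 2) := by
    nlinarith [sq_nonneg (M 0 0 * M 0 1 + M 1 0 * M 1 1)]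
  have q4 : (1:ℝ) ≤ ‖M‖ ^ 2 * ‖M‖ ^ 2 := by
    calc (1:ℝ) ≤ (M 0 0 ^ 2 + M 1 0 ^ 2) * (M 0 1 ^ 2 + M 1 1 ^ 2) := cs
    _ ≤ ‖M‖ ^ 2 * ‖M‖ ^ 2 := by
        apply mul_le_mul q1 q2 (by positivity) (by positivity)
  by_contra hcon
  push_neg at hcon
  have h0 := norm_nonneg M
  have hsq : ‖M‖ ^ 2 < 1 := by nlinarith
  nlinarith

lemma cocNorm_nonneg {Ω : Type*} (T : Ω → Ω) (A : Ω → SL2) (n : ℕ) (ω : Ω) :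
    0 ≤ cocNorm T A n ω :=
  Real.log_nonneg (one_le_norm_sl2 _)

lemma coc_add {Ω : Type*} (T : Ω → Ω) (A : Ω → SL2) (n : ℕ) :
    ∀ (m : ℕ) (ω : Ω), coc T A (n + m) ω = coc T A n (T^[m] ω) * coc T A m ω := by
  intro m
  induction m with
  | zero => intro ω; simp [coc]
  | succ m ih =>
      intro ω
      have : n + (m + 1) = (n + m) + 1 := by ring
      rw [this]
      show coc T A (n + m) (T ω) * A ω = _
      rw [ih (T ω)]
      rw [Function.iterate_succ_apply]
      simp [coc, mul_assoc]

lemma cocNorm_subadd {Ω : Type*} (T : Ω → Ω) (A : Ω → SL2) (n m : ℕ) (ω : Ω) :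
    cocNorm T A (n + m) ω ≤ cocNorm T A n (T^[m] ω) + cocNorm T A m ω := by
  unfold cocNorm
  rw [coc_add]
  set X := coc T A n (T^[m] ω)
  set Y := coc T A m ω
  have hX : (1:ℝ) ≤ ‖(X : Matrix (Fin 2) (Fin 2) ℝ)‖ := one_le_norm_sl2 X
  have hY : (1:ℝ) ≤ ‖(Y : Matrix (Fin 2) (Fin 2) ℝ)‖ := one_le_norm_sl2 Y
  have hXY : (1:ℝ) ≤ ‖((X * Y : SL2) : Matrix (Fin 2) (Fin 2) ℝ)‖ := one_le_norm_sl2 _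
  have hcoe : ((X * Y : SL2) : Matrix (Fin 2) (Fin 2) ℝ)
      = (X : Matrix (Fin 2) (Fin 2) ℝ) * (Y : Matrix (Fin 2) (Fin 2) ℝ) := rfl
  have hmul : ‖((X * Y : SL2) : Matrix (Fin 2) (Fin 2) ℝ)‖
      ≤ ‖(X : Matrix (Fin 2) (Fin 2) ℝ)‖ * ‖(Y : Matrix (Fin 2) (Fin 2) ℝ)‖ := by
    rw [hcoe]; exact norm_mul_le _ _
  calc Real.log ‖((X * Y : SL2) : Matrix (Fin 2) (Fin 2) ℝ)‖
      ≤ Real.log (‖(X : Matrix (Fin 2) (Fin 2) ℝ)‖ * ‖(Y : Matrix (Fin 2) (Fin 2) ℝ)‖) := by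
        apply Real.log_le_log (by linarith) hmul
    _ = Real.log ‖(X : Matrix (Fin 2) (Fin 2) ℝ)‖ + Real.log ‖(Y : Matrix (Fin 2) (Fin 2) ℝ)‖ :=
        Real.log_mul (by linarith) (by linarith)

lemma coc_continuous {Ω : Type*} [TopologicalSpace Ω] (T : Ω → Ω) (hT : Continuous T)
    (A : Ω → SL2) (hA : Continuous (fun ω => (A ω : Matrix (Fin 2) (Fin 2) ℝ))) (n : ℕ) :
    Continuous (fun ω => (coc T A n ω : Matrix (Fin 2) (Fin 2) ℝ)) := by
  induction n with
  | zero => exact continuous_const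
  | succ n ih =>
      have : (fun ω => (coc T A (n+1) ω : Matrix (Fin 2) (Fin 2) ℝ))
          = fun ω => (coc T A n (T ω) : Matrix (Fin 2) (Fin 2) ℝ) * (A ω : Matrix (Fin 2) (Fin 2) ℝ) :=
        rfl
      rw [this]
      exact (ih.comp hT).mul hA

lemma cocNorm_continuous {Ω : Type*} [TopologicalSpace Ω] (T : Ω → Ω) (hT : Continuous T)
    (A : Ω → SL2) (hA : Continuous (fun ω => (A ω : Matrix (Fin 2) (Fin 2) ℝ))) (n : ℕ) :
    Continuous (cocNorm T A n) := by
  apply Continuous.log ((coc_continuous T hT A hA n).norm)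
  intro ω
  have := one_le_norm_sl2 (coc T A n ω)
  linarith

end Aux

/-- For a uniquely ergodic system, a continuous cocycle `A` with
`(1/n) sup_{ω,ϱ} |log‖A_n(ω)‖ - log‖A_n(ϱ)‖| → 0` is uniform. -/
theorem uniform_of_var_tendsto_zero {Ω : Type*} [MetricSpace Ω] [CompactSpace Ω]
    [MeasurableSpace Ω] [BorelSpace Ω] (T : Ω ≃ₜ Ω)
    (hex : ∃ μ : Measure Ω, IsProbabilityMeasure μ ∧ MeasurePreserving (⇑T) μ μ)
    (huniq : ∀ μ ν : Measure Ω, IsProbabilityMeasure μ → IsProbabilityMeasure ν →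
      MeasurePreserving (⇑T) μ μ → MeasurePreserving (⇑T) ν ν → μ = ν)
    (A : Ω → SL2) (hA : Continuous (fun ω => (A ω : Matrix (Fin 2) (Fin 2) ℝ)))
    (hvar : ∀ ε > (0 : ℝ), ∃ N : ℕ, ∀ n ≥ N, ∀ ω ϱ : Ω,
      (1 / n : ℝ) * |cocNorm (⇑T) A n ω - cocNorm (⇑T) A n ϱ| < ε) :
    IsUniformCocycle (⇑T) A := by
  -- Ω is nonempty since it carries a probability measure
  obtain ⟨μ, hμ, -⟩ := hex
  haveI : Nonempty Ω := by
    by_contra h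
    rw [not_nonempty_iff] at h
    have h1 : μ Set.univ = 1 := hμ.measure_univ
    rw [Set.univ_eq_empty_iff.mpr h, measure_empty] at h1
    exact zero_ne_one h1
  have hc : ∀ n, Continuous (cocNorm (⇑T) A n) :=
    cocNorm_continuous (⇑T) T.continuous A hA
  set b : ℕ → ℝ := fun n => sSup (Set.range (cocNorm (⇑T) A n)) with hb
  have hcomp : ∀ n, IsCompact (Set.range (cocNorm (⇑T) A n)) :=
    fun n => isCompact_range (hc n)
  have hb_mem : ∀ n, b n ∈ Set.range (cocNorm (⇑T) A n) :=
    fun n => (hcomp n).sSup_mem (Set.range_nonempty _)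
  have hle : ∀ n ω, cocNorm (⇑T) A n ω ≤ b n :=
    fun n ω => le_csSup (hcomp n).bddAbove ⟨ω, rfl⟩
  have hb_nonneg : ∀ n, 0 ≤ b n := by
    intro n
    obtain ⟨ϱ, hϱ⟩ := hb_mem n
    rw [← hϱ]
    exact cocNorm_nonneg _ _ _ _
  have hsub : Subadditive b := by
    intro m n
    obtain ⟨ϱ, hϱ⟩ := hb_mem (m + n)
    rw [← hϱ]
    calc cocNorm (⇑T) A (m + n) ϱ
        ≤ cocNorm (⇑T) A m ((⇑T)^[n] ϱ) + cocNorm (⇑T) A n ϱ := cocNorm_subadd _ _ _ _ _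
      _ ≤ b m + b n := add_le_add (hle m _) (hle n _)
  have hbdd : BddBelow (Set.range fun n : ℕ => b n / n) := by
    refine ⟨0, ?_⟩
    rintro x ⟨n, rfl⟩
    exact div_nonneg (hb_nonneg n) (Nat.cast_nonneg n)
  have hlim := hsub.tendsto_lim hbdd
  refine ⟨hsub.lim, ?_⟩
  intro ε hε
  obtain ⟨N1, hN1⟩ := hvar (ε / 2) (by positivity)
  obtain ⟨N2, hN2⟩ := Metric.tendsto_atTop.mp hlim (ε / 2) (by positivity)
  refine ⟨max N1 N2, fun n hn ω => ?_⟩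
  obtain ⟨ϱ, hϱ⟩ := hb_mem n
  have h1 : (1 / n : ℝ) * |cocNorm (⇑T) A n ω - cocNorm (⇑T) A n ϱ| < ε / 2 :=
    hN1 n (le_trans (le_max_left _ _) hn) ω ϱ
  have h2 : |b n / n - hsub.lim| < ε / 2 := by
    have := hN2 n (le_trans (le_max_right _ _) hn)
    rwa [Real.dist_eq] at this
  have key : |(1 / n : ℝ) * cocNorm (⇑T) A n ω - b n / n|
      = (1 / n : ℝ) * |cocNorm (⇑T) A n ω - cocNorm (⇑T) A n ϱ| := by
    have heq : (1 / n : ℝ) * cocNorm (⇑T) A n ω - b n / n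
        = (1 / n : ℝ) * (cocNorm (⇑T) A n ω - cocNorm (⇑T) A n ϱ) := by
      rw [← hϱ]; ring
    rw [heq, abs_mul, abs_of_nonneg (show (0:ℝ) ≤ 1 / n by positivity)]
  calc |(1 / n : ℝ) * cocNorm (⇑T) A n ω - hsub.lim|
      ≤ |(1 / n : ℝ) * cocNorm (⇑T) A n ω - b n / n| + |b n / n - hsub.lim| :=
        abs_sub_le _ _ _
    _ < ε / 2 + ε / 2 := by rw [key]; exact add_lt_add h1 h2
    _ = ε := by ring
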